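/- For all real s with 0 < s < 1 and all real t ≥ 0, t - s·log((e^t + s - 1)/s) ≥ (1 - s)·t²/(t + 1 + s). -/

import Mathlib

open Real Set

theorem stmt2 (s t : ℝ) (hs0 : 0 < s) (hs1 : s < 1) (ht : 0 ≤ t) :
    t - s * Real.log ((Real.exp t + s - 1) / s) ≥ (1 - s) * t ^ 2 / (t + 1 + s) := by
  have hE : ∀ x : ℝ, 0 ≤ x → 0 < Real.exp x + s - 1 := by
    intro x hx
    nlinarith [Real.one_le_exp hx]
  have hA : ∀ x : ℝ, 0 ≤ x → 0 < x + 1 + s := by intro x hx; linarith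
  set g : ℝ → ℝ := fun x => x - s * Real.log (Real.exp x + s - 1) + s * Real.log s
      - (1 - s) * x ^ 2 / (x + 1 + s) with hg
  have hderiv : ∀ x : ℝ, 0 ≤ x → HasDerivAt g
      (1 - s * (Real.exp x / (Real.exp x + s - 1))
        - (((1 - s) * (2 * x)) * (x + 1 + s) - ((1 - s) * x ^ 2) * 1) / (x + 1 + s) ^ 2) x := by
    intro x hx
    have h1 : HasDerivAt (fun y : ℝ => Real.exp y + s - 1) (Real.exp x) x := by
      simpa using ((Real.hasDerivAt_exp x).add_const s).sub_const 1
    have h2 : HasDerivAt (fun y : ℝ => Real.log (Real.exp y + s - 1))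
        (Real.exp x / (Real.exp x + s - 1)) x := h1.log (ne_of_gt (hE x hx))
    have h3 : HasDerivAt (fun y : ℝ => (1 - s) * y ^ 2) ((1 - s) * (2 * x)) x := by
      simpa using ((hasDerivAt_pow 2 x).const_mul (1 - s))
    have h4 : HasDerivAt (fun y : ℝ => y + 1 + s) 1 x := by
      simpa using ((hasDerivAt_id x).add_const 1).add_const s
    have h5 := h3.div h4 (ne_of_gt (hA x hx))
    have h6 := (((hasDerivAt_id x).sub (h2.const_mul s)).add_const (s * Real.log s)).sub h5
    exact h6
  have hmono : MonotoneOn g (Ici (0:ℝ)) := by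
    apply monotoneOn_of_deriv_nonneg (convex_Ici 0)
    · intro x hx
      exact (hderiv x hx).continuousAt.continuousWithinAt
    · intro x hx
      rw [interior_Ici] at hx
      exact (hderiv x (le_of_lt hx)).differentiableAt.differentiableWithinAt
    · intro x hx
      rw [interior_Ici] at hx
      have hx0 : (0:ℝ) ≤ x := le_of_lt hx
      rw [(hderiv x hx0).deriv]
      have hE1 : 1 ≤ Real.exp x := Real.one_le_exp hx0
      have hEq : (1 + x / 2) ^ 2 ≤ Real.exp x := by
        have h := Real.add_one_le_exp (x / 2)
        have h2 : Real.exp (x / 2) ^ 2 = Real.exp x := by rw [sq, ← Real.exp_add]; ring_nf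
        nlinarith [Real.exp_pos (x / 2)]
      have hEpos := hE x hx0
      have hApos := hA x hx0
      have key : x * (x + 2 + 2 * s) * (Real.exp x + s - 1)
          ≤ (Real.exp x - 1) * (x + 1 + s) ^ 2 := by
        have e1 : 0 ≤ (Real.exp x - (1 + x / 2) ^ 2) * (1 + s) ^ 2 :=
          mul_nonneg (by linarith) (sq_nonneg _)
        have e2 : (0:ℝ) ≤ 1 - s ^ 2 := by nlinarith
        nlinarith [e1, sq_nonneg ((1 - s) * x), mul_nonneg hx0 e2]
      have hid : 1 - s * (Real.exp x / (Real.exp x + s - 1))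
          - (((1 - s) * (2 * x)) * (x + 1 + s) - ((1 - s) * x ^ 2) * 1) / (x + 1 + s) ^ 2
          = (1 - s) * (((Real.exp x - 1) * (x + 1 + s) ^ 2
              - x * (x + 2 + 2 * s) * (Real.exp x + s - 1))
              / ((Real.exp x + s - 1) * (x + 1 + s) ^ 2)) := by
        field_simp
        ring
      rw [hid]
      apply mul_nonneg (by linarith)
      exact div_nonneg (by linarith) (by positivity)
  have h0 : g 0 = 0 := by
    have hs : Real.exp 0 + s - 1 = s := by rw [Real.exp_zero]; ring
    simp [hg, hs]
  have hgt : (0:ℝ) ≤ g t := by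
    have := hmono (self_mem_Ici) (mem_Ici.mpr ht) ht
    rwa [h0] at this
  have hlog : Real.log ((Real.exp t + s - 1) / s)
      = Real.log (Real.exp t + s - 1) - Real.log s :=
    Real.log_div (ne_of_gt (hE t ht)) (ne_of_gt hs0)
  have hgeq : g t = t - s * (Real.log (Real.exp t + s - 1) - Real.log s)
      - (1 - s) * t ^ 2 / (t + 1 + s) := by
    simp only [hg]
    ring
  rw [ge_iff_le, ← sub_nonneg, hlog, ← hgeq]
  exact hgt
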